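/- arXiv:1403.4104 — 2 statements merged into one kernel-verified Lean document; each statement's English description precedes it below -/
import Mathlib

section
/- Let K be a field, H = (H₁,…,H_p) ∈ K[x,y]^p a mother code with baby series vector h = (h₁,…,h_p) ∈ K[[x]]^p, and let G₁,…,G_r ∈ K[x,y]^s be polynomial vectors; set g_k = G_k(x,h(x)) ∈ K[[x]]^s, regarded inside K[[x,y]]^s. Then the submodule of K[[x,y]]^s generated by the vectors (yᵢ − hᵢ)·e_ℓ (1 ≤ i ≤ p, 1 ≤ ℓ ≤ s) together with g₁,…,g_r equals the submodule generated by the vectors Hᵢ·e_ℓ (1 ≤ i ≤ p, 1 ≤ ℓ ≤ s) together with G₁,…,G_r. -/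
variable {K : Type*} [Field K] {n p : ℕ}

/-- Substitution of the power series vector `h` for the `y`-variables (and `xⱼ` for itself)
in a polynomial `H ∈ K[x,y]`, yielding a power series in `K[[x]]`. -/
noncomputable def substY (H : MvPolynomial (Fin n ⊕ Fin p) K)
    (h : Fin p → MvPowerSeries (Fin n) K) : MvPowerSeries (Fin n) K :=
  MvPolynomial.aeval (Sum.elim (fun j => MvPowerSeries.X j) h) H

/-- A mother code: a vector `H = (H₁,…,H_p)` of polynomials in `K[x,y]` with `H(0,0) = 0`
whose Jacobian matrix `(∂H_i/∂y_j)` is invertible at the origin. -/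
def IsMotherCode (H : Fin p → MvPolynomial (Fin n ⊕ Fin p) K) : Prop :=
  (∀ i, MvPolynomial.eval (0 : Fin n ⊕ Fin p → K) (H i) = 0) ∧
  IsUnit (Matrix.of fun i j : Fin p =>
    MvPolynomial.eval (0 : Fin n ⊕ Fin p → K) (MvPolynomial.pderiv (Sum.inr j) (H i)))

/-- A formal power series is algebraic if it satisfies a nontrivial polynomial relation
over `K[x₁,…,xₙ]`. -/
def IsAlgPS {n : ℕ} (f : MvPowerSeries (Fin n) K) : Prop :=
  ∃ (d : ℕ) (q : Fin (d + 1) → MvPolynomial (Fin n) K), (∃ i, q i ≠ 0) ∧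
    ∑ i : Fin (d + 1), (q i : MvPowerSeries (Fin n) K) * f ^ (i : ℕ) = 0

open scoped Classical in
/-- The natural inclusion `K[[x]] → K[[x,y]]`. -/
noncomputable def inclPS (f : MvPowerSeries (Fin n) K) :
    MvPowerSeries (Fin n ⊕ Fin p) K :=
  fun e =>
    if ∀ j : Fin p, e (Sum.inr j) = 0 then
      MvPowerSeries.coeff (Finsupp.comapDomain Sum.inl e Sum.inl_injective.injOn) f
    else 0

namespace FamCode
open MvPowerSeries Finsupp

variable {K : Type*} [Field K] {n p : ℕ}

/-- The embedding `Fin n ↪ Fin n ⊕ Fin p`. -/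
def emb : Fin n ↪ (Fin n ⊕ Fin p) := ⟨Sum.inl, Sum.inl_injective⟩

lemma embDomain_comap {e : (Fin n ⊕ Fin p) →₀ ℕ} (he : ∀ j : Fin p, e (Sum.inr j) = 0) :
    Finsupp.embDomain (emb (p := p)) (Finsupp.comapDomain Sum.inl e Sum.inl_injective.injOn) = e := by
  ext t
  cases t with
  | inl a =>
    rw [show (Sum.inl a : Fin n ⊕ Fin p) = emb a from rfl, Finsupp.embDomain_apply_self,
      Finsupp.comapDomain_apply]
    rfl
  | inr j =>
    rw [Finsupp.embDomain_notin_range, he j]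
    rintro ⟨a, ha⟩
    exact Sum.inl_ne_inr ha

lemma comap_embDomain (d : Fin n →₀ ℕ) :
    Finsupp.comapDomain Sum.inl (Finsupp.embDomain (emb (p := p)) d) Sum.inl_injective.injOn = d := by
  ext a
  rw [Finsupp.comapDomain_apply, show (Sum.inl a : Fin n ⊕ Fin p) = emb a from rfl,
    Finsupp.embDomain_apply_self]

lemma inclPS_apply_embDomain (f : MvPowerSeries (Fin n) K) (d : Fin n →₀ ℕ) :
    inclPS (p := p) f (Finsupp.embDomain emb d) = MvPowerSeries.coeff d f := by
  simp only [inclPS]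
  rw [if_pos, comap_embDomain]
  intro j
  rw [Finsupp.embDomain_notin_range]
  rintro ⟨a, ha⟩
  exact Sum.inl_ne_inr ha

lemma inclPS_apply_ne (f : MvPowerSeries (Fin n) K) (e : (Fin n ⊕ Fin p) →₀ ℕ)
    (he : ¬ ∀ j : Fin p, e (Sum.inr j) = 0) : inclPS f e = 0 := by
  simp only [inclPS]
  rw [if_neg he]

end FamCode
namespace FamCode
open MvPowerSeries Finsupp

variable {K : Type*} [Field K] {n p : ℕ}

lemma support_cond_of_add {e a b : (Fin n ⊕ Fin p) →₀ ℕ} (hab : a + b = e)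
    (he : ∀ j : Fin p, e (Sum.inr j) = 0) :
    (∀ j : Fin p, a (Sum.inr j) = 0) ∧ (∀ j : Fin p, b (Sum.inr j) = 0) := by
  constructor <;> intro j <;>
  · have := he j
    rw [← hab] at this
    simp only [Finsupp.add_apply] at this
    omega

/-- `inclPS` as a ring homomorphism. -/
noncomputable def inclHom : MvPowerSeries (Fin n) K →+* MvPowerSeries (Fin n ⊕ Fin p) K where
  toFun := inclPS
  map_one' := by
    classical
    funext e
    by_cases he : ∀ j : Fin p, e (Sum.inr j) = 0
    · rw [← embDomain_comap he, inclPS_apply_embDomain]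
      show _ = MvPowerSeries.coeff _ (1 : MvPowerSeries (Fin n ⊕ Fin p) K)
      rw [MvPowerSeries.coeff_one, MvPowerSeries.coeff_one]
      simp [Finsupp.embDomain_eq_zero]
    · rw [inclPS_apply_ne _ _ he]
      show (0 : K) = MvPowerSeries.coeff e (1 : MvPowerSeries (Fin n ⊕ Fin p) K)
      rw [MvPowerSeries.coeff_one, if_neg]
      rintro rfl
      exact he fun j => rfl
  map_mul' := by
    classical
    intro f g
    funext e
    show inclPS (f * g) e = MvPowerSeries.coeff e (inclPS f * inclPS g)
    by_cases he : ∀ j : Fin p, e (Sum.inr j) = 0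
    · rw [← embDomain_comap he]
      set d := Finsupp.comapDomain Sum.inl e Sum.inl_injective.injOn with hd
      rw [inclPS_apply_embDomain, MvPowerSeries.coeff_mul, MvPowerSeries.coeff_mul]
      refine Finset.sum_bij' (fun q _ => (Finsupp.embDomain emb q.1, Finsupp.embDomain emb q.2))
        (fun q _ => (Finsupp.comapDomain Sum.inl q.1 Sum.inl_injective.injOn,
          Finsupp.comapDomain Sum.inl q.2 Sum.inl_injective.injOn)) ?_ ?_ ?_ ?_ ?_
      · intro q hq
        rw [Finset.HasAntidiagonal.mem_antidiagonal] at hq ⊢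
        rw [← Finsupp.embDomain_add, hq]
      · intro q hq
        rw [Finset.HasAntidiagonal.mem_antidiagonal] at hq ⊢
        obtain ⟨h1, h2⟩ := support_cond_of_add hq (by
          intro j; rw [Finsupp.embDomain_notin_range]; rintro ⟨a, ha⟩; exact Sum.inl_ne_inr ha)
        apply Finsupp.embDomain_injective emb
        rw [Finsupp.embDomain_add, embDomain_comap h1, embDomain_comap h2, hq]
      · intro q hq
        ext1 <;> simp only <;> rw [comap_embDomain]
      · intro q hq
        rw [Finset.HasAntidiagonal.mem_antidiagonal] at hq
        obtain ⟨h1, h2⟩ := support_cond_of_add hq (by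
          intro j; rw [Finsupp.embDomain_notin_range]; rintro ⟨a, ha⟩; exact Sum.inl_ne_inr ha)
        ext1 <;> simp only <;> [exact embDomain_comap h1; exact embDomain_comap h2]
      · intro q hq
        simp only [MvPowerSeries.coeff_apply, inclPS_apply_embDomain,
          MvPowerSeries.coeff_apply]
    · rw [inclPS_apply_ne _ _ he, MvPowerSeries.coeff_mul]
      symm
      apply Finset.sum_eq_zero
      intro q hq
      rw [Finset.HasAntidiagonal.mem_antidiagonal] at hq
      push_neg at he
      obtain ⟨j, hj⟩ := he
      rw [← hq] at hj
      simp only [Finsupp.add_apply] at hj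
      have h12 : q.1 (Sum.inr j) ≠ 0 ∨ q.2 (Sum.inr j) ≠ 0 := by omega
      rcases h12 with h | h
      · simp only [MvPowerSeries.coeff_apply]
        rw [inclPS_apply_ne _ _ (fun hall => h (hall j)), zero_mul]
      · simp only [MvPowerSeries.coeff_apply]
        rw [inclPS_apply_ne _ _ (fun hall => h (hall j)), mul_zero]
  map_zero' := by
    funext e
    show inclPS (0 : MvPowerSeries (Fin n) K) e = (0 : MvPowerSeries (Fin n ⊕ Fin p) K) e
    by_cases he : ∀ j : Fin p, e (Sum.inr j) = 0
    · rw [← embDomain_comap he, inclPS_apply_embDomain, map_zero]; rfl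
    · rw [inclPS_apply_ne _ _ he]; rfl
  map_add' := by
    intro f g
    funext e
    show inclPS (f + g) e = inclPS f e + inclPS g e
    by_cases he : ∀ j : Fin p, e (Sum.inr j) = 0
    · rw [← embDomain_comap he, inclPS_apply_embDomain, inclPS_apply_embDomain,
        inclPS_apply_embDomain, map_add]
    · rw [inclPS_apply_ne _ _ he, inclPS_apply_ne _ _ he, inclPS_apply_ne _ _ he, add_zero]

end FamCode
namespace FamCode
open MvPowerSeries Finsupp

variable {K : Type*} [Field K] {n p : ℕ}

lemma inclHom_apply (f : MvPowerSeries (Fin n) K) : inclHom (p := p) f = inclPS f := rfl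

lemma coeff_inclHom (f : MvPowerSeries (Fin n) K) (d : Fin n →₀ ℕ) :
    MvPowerSeries.coeff (Finsupp.embDomain (emb (p := p)) d) (inclHom f) =
      MvPowerSeries.coeff d f :=
  inclPS_apply_embDomain f d

lemma coeff_inclHom_ne (f : MvPowerSeries (Fin n) K) (e : (Fin n ⊕ Fin p) →₀ ℕ)
    (he : ¬ ∀ j : Fin p, e (Sum.inr j) = 0) :
    MvPowerSeries.coeff e (inclHom f) = 0 :=
  inclPS_apply_ne f e he

lemma inclHom_C (a : K) :
    inclHom (p := p) (MvPowerSeries.C (σ := Fin n) (R := K) a) = MvPowerSeries.C (σ := Fin n ⊕ Fin p) (R := K) a := by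
  classical
  apply MvPowerSeries.ext
  intro e
  by_cases he : ∀ j : Fin p, e (Sum.inr j) = 0
  · rw [← embDomain_comap he, coeff_inclHom, MvPowerSeries.coeff_C, MvPowerSeries.coeff_C]
    simp [Finsupp.embDomain_eq_zero]
  · rw [coeff_inclHom_ne _ _ he, MvPowerSeries.coeff_C, if_neg]
    rintro rfl
    exact he fun j => rfl

lemma inclHom_X (j : Fin n) :
    inclHom (p := p) (MvPowerSeries.X j : MvPowerSeries (Fin n) K) =
      MvPowerSeries.X (Sum.inl j) := by
  classical
  apply MvPowerSeries.ext
  intro e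
  have hs : (Finsupp.single (Sum.inl j : Fin n ⊕ Fin p) 1) =
      Finsupp.embDomain emb (Finsupp.single j 1) := by
    rw [Finsupp.embDomain_single]; rfl
  by_cases he : ∀ j : Fin p, e (Sum.inr j) = 0
  · rw [← embDomain_comap he, coeff_inclHom, MvPowerSeries.coeff_X, MvPowerSeries.coeff_X, hs]
    simp only [← Finsupp.embDomain_single, Finsupp.embDomain_inj]
  · rw [coeff_inclHom_ne _ _ he, MvPowerSeries.coeff_X, if_neg]
    rintro rfl
    refine he fun j' => ?_
    simp [Finsupp.single_apply]

lemma constantCoeff_inclHom (f : MvPowerSeries (Fin n) K) :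
    MvPowerSeries.constantCoeff (σ := Fin n ⊕ Fin p) (R := K) (inclHom f) =
      MvPowerSeries.constantCoeff (σ := Fin n) (R := K) f := by
  rw [← MvPowerSeries.coeff_zero_eq_constantCoeff_apply,
    ← MvPowerSeries.coeff_zero_eq_constantCoeff_apply]
  have h0 : (0 : (Fin n ⊕ Fin p) →₀ ℕ) = Finsupp.embDomain (emb (p := p)) 0 := by
    rw [Finsupp.embDomain_zero]
  rw [h0, coeff_inclHom]

end FamCode
namespace FamCode
open MvPowerSeries Finsupp

variable {K : Type*} [Field K] {n p : ℕ}

lemma substY_C (a : K) (h : Fin p → MvPowerSeries (Fin n) K) :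
    substY (MvPolynomial.C a) h = MvPowerSeries.C (σ := Fin n) (R := K) a := by
  rw [substY, MvPolynomial.aeval_C, ← MvPowerSeries.c_eq_algebraMap]

lemma substY_add (P Q : MvPolynomial (Fin n ⊕ Fin p) K) (h : Fin p → MvPowerSeries (Fin n) K) :
    substY (P + Q) h = substY P h + substY Q h := map_add _ _ _

lemma substY_mul (P Q : MvPolynomial (Fin n ⊕ Fin p) K) (h : Fin p → MvPowerSeries (Fin n) K) :
    substY (P * Q) h = substY P h * substY Q h := map_mul _ _ _

lemma substY_X_inl (j : Fin n) (h : Fin p → MvPowerSeries (Fin n) K) :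
    substY (MvPolynomial.X (Sum.inl j)) h = MvPowerSeries.X j := by
  rw [substY, MvPolynomial.aeval_X]; rfl

lemma substY_X_inr (i : Fin p) (h : Fin p → MvPowerSeries (Fin n) K) :
    substY (MvPolynomial.X (Sum.inr i)) h = h i := by
  rw [substY, MvPolynomial.aeval_X]; rfl

lemma constantCoeff_substY (h : Fin p → MvPowerSeries (Fin n) K)
    (h0 : ∀ i, MvPowerSeries.constantCoeff (σ := Fin n) (R := K) (h i) = 0)
    (P : MvPolynomial (Fin n ⊕ Fin p) K) :
    MvPowerSeries.constantCoeff (σ := Fin n) (R := K) (substY P h) =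
      MvPolynomial.eval (0 : Fin n ⊕ Fin p → K) P := by
  induction P using MvPolynomial.induction_on with
  | C a => rw [substY_C, MvPowerSeries.constantCoeff_C, MvPolynomial.eval_C]
  | add P Q hP hQ => rw [substY_add, map_add, hP, hQ, map_add]
  | mul_X P i hP =>
    rw [substY_mul, map_mul, hP, map_mul]
    cases i with
    | inl j => rw [substY_X_inl, MvPowerSeries.constantCoeff_X, MvPolynomial.eval_X]; rfl
    | inr i => rw [substY_X_inr, h0 i, MvPolynomial.eval_X]; rfl

/-- The ideal generated by the `yᵢ - hᵢ`. -/
noncomputable def Jyh (h : Fin p → MvPowerSeries (Fin n) K) :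
    Ideal (MvPowerSeries (Fin n ⊕ Fin p) K) :=
  Ideal.span (Set.range fun i : Fin p =>
    MvPowerSeries.X (Sum.inr i) - inclHom (h i))

lemma mem_max_of_constantCoeff_zero (f : MvPowerSeries (Fin n ⊕ Fin p) K)
    (hf : MvPowerSeries.constantCoeff (σ := Fin n ⊕ Fin p) (R := K) f = 0) :
    f ∈ IsLocalRing.maximalIdeal (MvPowerSeries (Fin n ⊕ Fin p) K) := by
  rw [IsLocalRing.mem_maximalIdeal, mem_nonunits_iff, MvPowerSeries.isUnit_iff_constantCoeff, hf]
  exact not_isUnit_zero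

/-- Key Taylor-type lemma: `P - P(x,h) - Σⱼ (∂P/∂yⱼ)(0) (yⱼ - hⱼ) ∈ m ⬝ J`. -/
lemma taylor_mem (h : Fin p → MvPowerSeries (Fin n) K)
    (h0 : ∀ i, MvPowerSeries.constantCoeff (σ := Fin n) (R := K) (h i) = 0)
    (P : MvPolynomial (Fin n ⊕ Fin p) K) :
    (P : MvPowerSeries (Fin n ⊕ Fin p) K) - inclHom (substY P h) -
      ∑ j : Fin p, MvPowerSeries.C (σ := Fin n ⊕ Fin p) (R := K)
        (MvPolynomial.eval (0 : Fin n ⊕ Fin p → K) (MvPolynomial.pderiv (Sum.inr j) P)) *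
        (MvPowerSeries.X (Sum.inr j) - inclHom (h j)) ∈
      (IsLocalRing.maximalIdeal (MvPowerSeries (Fin n ⊕ Fin p) K)) • (Jyh h) := by
  classical
  induction P using MvPolynomial.induction_on with
  | C a =>
    have : ((MvPolynomial.C a : MvPolynomial (Fin n ⊕ Fin p) K) : MvPowerSeries (Fin n ⊕ Fin p) K) - inclHom (substY (MvPolynomial.C a) h) -
        ∑ j : Fin p, MvPowerSeries.C (σ := Fin n ⊕ Fin p) (R := K)
          (MvPolynomial.eval (0 : Fin n ⊕ Fin p → K) (MvPolynomial.pderiv (Sum.inr j) (MvPolynomial.C a))) *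
          (MvPowerSeries.X (Sum.inr j) - inclHom (h j)) = 0 := by
      simp [substY_C, inclHom_C, MvPolynomial.coe_C, MvPolynomial.pderiv_C]
    rw [this]
    exact zero_mem _
  | add P Q hP hQ =>
    have heq : ((P + Q : MvPolynomial (Fin n ⊕ Fin p) K) : MvPowerSeries (Fin n ⊕ Fin p) K) -
        inclHom (substY (P + Q) h) -
        ∑ j : Fin p, MvPowerSeries.C (σ := Fin n ⊕ Fin p) (R := K)
          (MvPolynomial.eval (0 : Fin n ⊕ Fin p → K) (MvPolynomial.pderiv (Sum.inr j) (P + Q))) *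
          (MvPowerSeries.X (Sum.inr j) - inclHom (h j)) =
        ((P : MvPowerSeries (Fin n ⊕ Fin p) K) - inclHom (substY P h) -
          ∑ j : Fin p, MvPowerSeries.C (σ := Fin n ⊕ Fin p) (R := K)
            (MvPolynomial.eval (0 : Fin n ⊕ Fin p → K) (MvPolynomial.pderiv (Sum.inr j) P)) *
            (MvPowerSeries.X (Sum.inr j) - inclHom (h j))) +
        ((Q : MvPowerSeries (Fin n ⊕ Fin p) K) - inclHom (substY Q h) -
          ∑ j : Fin p, MvPowerSeries.C (σ := Fin n ⊕ Fin p) (R := K)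
            (MvPolynomial.eval (0 : Fin n ⊕ Fin p → K) (MvPolynomial.pderiv (Sum.inr j) Q)) *
            (MvPowerSeries.X (Sum.inr j) - inclHom (h j))) := by
      simp only [MvPolynomial.coe_add, substY_add, map_add, add_mul, Finset.sum_add_distrib]
      ring
    rw [heq]
    exact add_mem hP hQ
  | mul_X P i hP =>
    set S : MvPowerSeries (Fin n ⊕ Fin p) K :=
      ∑ j : Fin p, MvPowerSeries.C (σ := Fin n ⊕ Fin p) (R := K)
        (MvPolynomial.eval (0 : Fin n ⊕ Fin p → K) (MvPolynomial.pderiv (Sum.inr j) P)) *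
        (MvPowerSeries.X (Sum.inr j) - inclHom (h j)) with hS
    have hSJ : S ∈ Jyh h :=
      Ideal.sum_mem _ fun j _ => Ideal.mul_mem_left _ _ (Ideal.subset_span ⟨j, rfl⟩)
    cases i with
    | inl t =>
      have hXm : MvPowerSeries.X (Sum.inl t : Fin n ⊕ Fin p) ∈
          IsLocalRing.maximalIdeal (MvPowerSeries (Fin n ⊕ Fin p) K) :=
        mem_max_of_constantCoeff_zero _ (MvPowerSeries.constantCoeff_X _)
      have heq : ((P * MvPolynomial.X (Sum.inl t) : MvPolynomial (Fin n ⊕ Fin p) K) :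
            MvPowerSeries (Fin n ⊕ Fin p) K) -
          inclHom (substY (P * MvPolynomial.X (Sum.inl t)) h) -
          ∑ j : Fin p, MvPowerSeries.C (σ := Fin n ⊕ Fin p) (R := K)
            (MvPolynomial.eval (0 : Fin n ⊕ Fin p → K)
              (MvPolynomial.pderiv (Sum.inr j) (P * MvPolynomial.X (Sum.inl t)))) *
            (MvPowerSeries.X (Sum.inr j) - inclHom (h j)) =
          MvPowerSeries.X (Sum.inl t) *
            ((P : MvPowerSeries (Fin n ⊕ Fin p) K) - inclHom (substY P h) - S) +
          MvPowerSeries.X (Sum.inl t) * S := by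
        have hd : ∀ j : Fin p, MvPolynomial.eval (0 : Fin n ⊕ Fin p → K)
            (MvPolynomial.pderiv (Sum.inr j) (P * MvPolynomial.X (Sum.inl t))) = 0 := by
          intro j
          rw [MvPolynomial.pderiv_mul, MvPolynomial.pderiv_X_of_ne (by simp), mul_zero, add_zero,
            map_mul, MvPolynomial.eval_X, Pi.zero_apply, mul_zero]
        simp only [MvPolynomial.coe_mul, MvPolynomial.coe_X, substY_mul, substY_X_inl, map_mul,
          inclHom_X, hd, map_zero, zero_mul, Finset.sum_const_zero, sub_zero]
        ring
      rw [heq]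
      exact add_mem (Submodule.smul_mem _ _ hP) (Submodule.smul_mem_smul hXm hSJ)
    | inr t =>
      have hXm : MvPowerSeries.X (Sum.inr t : Fin n ⊕ Fin p) ∈
          IsLocalRing.maximalIdeal (MvPowerSeries (Fin n ⊕ Fin p) K) :=
        mem_max_of_constantCoeff_zero _ (MvPowerSeries.constantCoeff_X _)
      have hgen : MvPowerSeries.X (Sum.inr t) - inclHom (h t) ∈ Jyh h :=
        Ideal.subset_span ⟨t, rfl⟩
      have hψm : inclHom (substY P h) -
          MvPowerSeries.C (σ := Fin n ⊕ Fin p) (R := K) (MvPolynomial.eval (0 : Fin n ⊕ Fin p → K) P) ∈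
          IsLocalRing.maximalIdeal (MvPowerSeries (Fin n ⊕ Fin p) K) := by
        apply mem_max_of_constantCoeff_zero
        rw [map_sub, constantCoeff_inclHom, constantCoeff_substY h h0, MvPowerSeries.constantCoeff_C,
          sub_self]
      have hsum : (∑ j : Fin p, MvPowerSeries.C (σ := Fin n ⊕ Fin p) (R := K)
          (MvPolynomial.eval (0 : Fin n ⊕ Fin p → K)
            (MvPolynomial.pderiv (Sum.inr j) (P * MvPolynomial.X (Sum.inr t)))) *
          (MvPowerSeries.X (Sum.inr j) - inclHom (h j))) =
          MvPowerSeries.C (σ := Fin n ⊕ Fin p) (R := K) (MvPolynomial.eval (0 : Fin n ⊕ Fin p → K) P) *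
            (MvPowerSeries.X (Sum.inr t) - inclHom (h t)) := by
        rw [Finset.sum_eq_single t]
        · rw [MvPolynomial.pderiv_mul, MvPolynomial.pderiv_X_self, mul_one, map_add, map_mul,
            MvPolynomial.eval_X, Pi.zero_apply, mul_zero, zero_add]
        · intro b _ hbt
          rw [MvPolynomial.pderiv_mul, MvPolynomial.pderiv_X_of_ne (by simp [Ne, Sum.inr.injEq]; exact fun h' => hbt h'.symm),
            mul_zero, add_zero, map_mul, MvPolynomial.eval_X, Pi.zero_apply, mul_zero, map_zero,
            zero_mul]
        · intro hbt
          exact absurd (Finset.mem_univ t) hbt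
      have heq : ((P * MvPolynomial.X (Sum.inr t) : MvPolynomial (Fin n ⊕ Fin p) K) :
            MvPowerSeries (Fin n ⊕ Fin p) K) -
          inclHom (substY (P * MvPolynomial.X (Sum.inr t)) h) -
          ∑ j : Fin p, MvPowerSeries.C (σ := Fin n ⊕ Fin p) (R := K)
            (MvPolynomial.eval (0 : Fin n ⊕ Fin p → K)
              (MvPolynomial.pderiv (Sum.inr j) (P * MvPolynomial.X (Sum.inr t)))) *
            (MvPowerSeries.X (Sum.inr j) - inclHom (h j)) =
          MvPowerSeries.X (Sum.inr t) *
            ((P : MvPowerSeries (Fin n ⊕ Fin p) K) - inclHom (substY P h) - S) +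
          MvPowerSeries.X (Sum.inr t) * S +
          (inclHom (substY P h) -
            MvPowerSeries.C (σ := Fin n ⊕ Fin p) (R := K) (MvPolynomial.eval (0 : Fin n ⊕ Fin p → K) P)) *
            (MvPowerSeries.X (Sum.inr t) - inclHom (h t)) := by
        rw [hsum]
        simp only [MvPolynomial.coe_mul, MvPolynomial.coe_X, substY_mul, substY_X_inr, map_mul]
        ring
      rw [heq]
      exact add_mem (add_mem (Submodule.smul_mem _ _ hP) (Submodule.smul_mem_smul hXm hSJ))
        (Submodule.smul_mem_smul hψm hgen)

end FamCode
namespace FamCode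
open MvPowerSeries Finsupp

variable {K : Type*} [Field K] {n p : ℕ}

lemma sub_mem_Jyh (h : Fin p → MvPowerSeries (Fin n) K)
    (h0 : ∀ i, MvPowerSeries.constantCoeff (σ := Fin n) (R := K) (h i) = 0)
    (P : MvPolynomial (Fin n ⊕ Fin p) K) :
    (P : MvPowerSeries (Fin n ⊕ Fin p) K) - inclHom (substY P h) ∈ Jyh h := by
  have hS : (∑ j : Fin p, MvPowerSeries.C (σ := Fin n ⊕ Fin p) (R := K)
      (MvPolynomial.eval (0 : Fin n ⊕ Fin p → K) (MvPolynomial.pderiv (Sum.inr j) P)) *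
      (MvPowerSeries.X (Sum.inr j) - inclHom (h j))) ∈ Jyh h :=
    Ideal.sum_mem _ fun j _ => Ideal.mul_mem_left _ _ (Ideal.subset_span ⟨j, rfl⟩)
  have ht := taylor_mem h h0 P
  have := Submodule.smul_le_right ht
  have heq : (P : MvPowerSeries (Fin n ⊕ Fin p) K) - inclHom (substY P h) =
      ((P : MvPowerSeries (Fin n ⊕ Fin p) K) - inclHom (substY P h) -
        ∑ j : Fin p, MvPowerSeries.C (σ := Fin n ⊕ Fin p) (R := K)
          (MvPolynomial.eval (0 : Fin n ⊕ Fin p → K) (MvPolynomial.pderiv (Sum.inr j) P)) *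
          (MvPowerSeries.X (Sum.inr j) - inclHom (h j))) +
      ∑ j : Fin p, MvPowerSeries.C (σ := Fin n ⊕ Fin p) (R := K)
        (MvPolynomial.eval (0 : Fin n ⊕ Fin p → K) (MvPolynomial.pderiv (Sum.inr j) P)) *
        (MvPowerSeries.X (Sum.inr j) - inclHom (h j)) := by ring
  rw [heq]
  exact add_mem this hS

theorem Jyh_eq_spanH (H : Fin p → MvPolynomial (Fin n ⊕ Fin p) K) (hmc : IsMotherCode H)
    (h : Fin p → MvPowerSeries (Fin n) K)
    (h0 : ∀ i, MvPowerSeries.constantCoeff (σ := Fin n) (R := K) (h i) = 0)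
    (hH : ∀ i, substY (H i) h = 0) :
    Jyh h = Ideal.span (Set.range fun i : Fin p =>
      ((H i : MvPolynomial (Fin n ⊕ Fin p) K) : MvPowerSeries (Fin n ⊕ Fin p) K)) := by
  classical
  set R := MvPowerSeries (Fin n ⊕ Fin p) K
  set c : Fin p → Fin p → K := fun i j =>
    MvPolynomial.eval (0 : Fin n ⊕ Fin p → K) (MvPolynomial.pderiv (Sum.inr j) (H i)) with hc
  -- q i := H i - Σ_k C(c i k)(Y_k - η_k) ∈ m • J
  have hq : ∀ i : Fin p, ((H i : MvPolynomial (Fin n ⊕ Fin p) K) : R) -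
      ∑ k : Fin p, MvPowerSeries.C (σ := Fin n ⊕ Fin p) (R := K) (c i k) *
        (MvPowerSeries.X (Sum.inr k) - inclHom (h k)) ∈
      (IsLocalRing.maximalIdeal R) • (Jyh h) := by
    intro i
    have := taylor_mem h h0 (H i)
    rwa [hH i, map_zero, sub_zero] at this
  have hHJ : ∀ i : Fin p, ((H i : MvPolynomial (Fin n ⊕ Fin p) K) : R) ∈ Jyh h := by
    intro i
    have hS : (∑ k : Fin p, MvPowerSeries.C (σ := Fin n ⊕ Fin p) (R := K) (c i k) *
        (MvPowerSeries.X (Sum.inr k) - inclHom (h k))) ∈ Jyh h :=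
      Ideal.sum_mem _ fun k _ => Ideal.mul_mem_left _ _ (Ideal.subset_span ⟨k, rfl⟩)
    have := Submodule.smul_le_right (hq i)
    have heq : ((H i : MvPolynomial (Fin n ⊕ Fin p) K) : R) =
        (((H i : MvPolynomial (Fin n ⊕ Fin p) K) : R) -
          ∑ k : Fin p, MvPowerSeries.C (σ := Fin n ⊕ Fin p) (R := K) (c i k) *
            (MvPowerSeries.X (Sum.inr k) - inclHom (h k))) +
        ∑ k : Fin p, MvPowerSeries.C (σ := Fin n ⊕ Fin p) (R := K) (c i k) *
          (MvPowerSeries.X (Sum.inr k) - inclHom (h k)) := by ring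
    rw [heq]
    exact add_mem this hS
  apply le_antisymm
  · -- Nakayama direction
    obtain ⟨u, hu⟩ := hmc.2
    set b : Matrix (Fin p) (Fin p) K := ↑u⁻¹ with hb
    have hbc : b * Matrix.of c = 1 := by rw [← hu]; exact u.inv_mul
    have hentry : ∀ i k : Fin p, (∑ j : Fin p, b i j * c j k) = if i = k then 1 else 0 := by
      intro i k
      have := congrFun (congrFun hbc i) k
      rwa [Matrix.mul_apply, Matrix.one_apply] at this
    apply Submodule.le_of_le_smul_of_le_jacobson_bot
    · exact Submodule.fg_span (Set.finite_range _)
    · exact (IsLocalRing.jacobson_eq_maximalIdeal ⊥ bot_ne_top).ge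
    · rw [Jyh, Ideal.span_le]
      rintro _ ⟨i, rfl⟩
      have hkey : MvPowerSeries.X (Sum.inr i) - inclHom (h i) =
          (∑ j : Fin p, MvPowerSeries.C (σ := Fin n ⊕ Fin p) (R := K) (b i j) *
            ((H j : MvPolynomial (Fin n ⊕ Fin p) K) : R)) +
          (- ∑ j : Fin p, MvPowerSeries.C (σ := Fin n ⊕ Fin p) (R := K) (b i j) *
            (((H j : MvPolynomial (Fin n ⊕ Fin p) K) : R) -
              ∑ k : Fin p, MvPowerSeries.C (σ := Fin n ⊕ Fin p) (R := K) (c j k) *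
                (MvPowerSeries.X (Sum.inr k) - inclHom (h k)))) := by
        symm
        rw [← sub_eq_add_neg, ← Finset.sum_sub_distrib]
        simp only [mul_sub, sub_sub_cancel, Finset.mul_sum, ← mul_assoc, ← map_mul]
        rw [Finset.sum_comm]
        simp only [← mul_sub]
        simp only [← Finset.sum_mul, ← map_sum, hentry]
        simp [apply_ite (MvPowerSeries.C (σ := Fin n ⊕ Fin p) (R := K))]
      have hA : (∑ j : Fin p, MvPowerSeries.C (σ := Fin n ⊕ Fin p) (R := K) (b i j) *
          ((H j : MvPolynomial (Fin n ⊕ Fin p) K) : R)) ∈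
          Ideal.span (Set.range fun i : Fin p =>
            ((H i : MvPolynomial (Fin n ⊕ Fin p) K) : R)) :=
        Ideal.sum_mem _ fun j _ => Ideal.mul_mem_left _ _ (Ideal.subset_span ⟨j, rfl⟩)
      have hB : (- ∑ j : Fin p, MvPowerSeries.C (σ := Fin n ⊕ Fin p) (R := K) (b i j) *
          (((H j : MvPolynomial (Fin n ⊕ Fin p) K) : R) -
            ∑ k : Fin p, MvPowerSeries.C (σ := Fin n ⊕ Fin p) (R := K) (c j k) *
              (MvPowerSeries.X (Sum.inr k) - inclHom (h k)))) ∈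
          (IsLocalRing.maximalIdeal R) • (Jyh h) :=
        neg_mem (Submodule.sum_mem _ fun j _ => Submodule.smul_mem _ _ (hq j))
      show MvPowerSeries.X (Sum.inr i) - inclHom (h i) ∈ _
      rw [hkey]
      exact Submodule.add_mem_sup hA hB
  · rw [Ideal.span_le]
    rintro _ ⟨i, rfl⟩
    exact hHJ i

end FamCode
namespace FamCode
open MvPowerSeries Finsupp

variable {K : Type*} [Field K] {n p : ℕ}

lemma single_mem_span {s : ℕ} (gs : Set (MvPowerSeries (Fin n ⊕ Fin p) K))
    (T : Submodule (MvPowerSeries (Fin n ⊕ Fin p) K) (Fin s → MvPowerSeries (Fin n ⊕ Fin p) K))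
    (hT : ∀ g ∈ gs, ∀ ℓ : Fin s, Pi.single ℓ g ∈ T)
    {a : MvPowerSeries (Fin n ⊕ Fin p) K} (ha : a ∈ Ideal.span gs) (ℓ : Fin s) :
    Pi.single ℓ a ∈ T := by
  induction ha using Submodule.span_induction with
  | mem x hx => exact hT x hx ℓ
  | zero => rw [Pi.single_zero]; exact zero_mem _
  | add x y hx hy hx' hy' => rw [Pi.single_add]; exact add_mem hx' hy'
  | smul c x hx hx' => rw [Pi.single_smul]; exact Submodule.smul_mem _ _ hx'

lemma vec_mem_span {s : ℕ} (gs : Set (MvPowerSeries (Fin n ⊕ Fin p) K))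
    (T : Submodule (MvPowerSeries (Fin n ⊕ Fin p) K) (Fin s → MvPowerSeries (Fin n ⊕ Fin p) K))
    (hT : ∀ g ∈ gs, ∀ ℓ : Fin s, Pi.single ℓ g ∈ T)
    (v : Fin s → MvPowerSeries (Fin n ⊕ Fin p) K) (hv : ∀ ℓ, v ℓ ∈ Ideal.span gs) :
    v ∈ T := by
  have hveq : v = ∑ ℓ : Fin s, Pi.single ℓ (v ℓ) := (Finset.univ_sum_single v).symm
  rw [hveq]
  exact Submodule.sum_mem _ fun ℓ _ => single_mem_span gs T hT (hv ℓ) ℓ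

end FamCode

/-- Lemma 8.1: the submodule of `K[[x,y]]^s` generated by the `(yᵢ − hᵢ)·e_ℓ` together with
the `g_k = G_k(x,h(x))` equals the submodule generated by the `Hᵢ·e_ℓ` and the `G_k`. -/
theorem family_code_module_eq {r s : ℕ}
    (H : Fin p → MvPolynomial (Fin n ⊕ Fin p) K) (hmc : IsMotherCode H)
    (h : Fin p → MvPowerSeries (Fin n) K)
    (h0 : ∀ i, MvPowerSeries.constantCoeff (h i) = 0)
    (hH : ∀ i, substY (H i) h = 0)
    (G : Fin r → (Fin s → MvPolynomial (Fin n ⊕ Fin p) K)) :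
    Submodule.span (MvPowerSeries (Fin n ⊕ Fin p) K)
      ({v | ∃ (i : Fin p) (ℓ : Fin s),
          v = Pi.single ℓ (MvPowerSeries.X (Sum.inr i : Fin n ⊕ Fin p) - inclPS (h i))} ∪
        Set.range (fun k => fun m => inclPS (substY (G k m) h)) :
          Set (Fin s → MvPowerSeries (Fin n ⊕ Fin p) K)) =
    Submodule.span (MvPowerSeries (Fin n ⊕ Fin p) K)
      ({v | ∃ (i : Fin p) (ℓ : Fin s),
          v = Pi.single ℓ ((H i : MvPowerSeries (Fin n ⊕ Fin p) K))} ∪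
        Set.range (fun k => fun m => ((G k m : MvPolynomial (Fin n ⊕ Fin p) K) :
          MvPowerSeries (Fin n ⊕ Fin p) K))) := by
  classical
  have hJ := FamCode.Jyh_eq_spanH H hmc h h0 hH
  have hJ' : FamCode.Jyh h = Ideal.span (Set.range fun i : Fin p =>
      MvPowerSeries.X (Sum.inr i) - inclPS (h i)) := rfl
  apply le_antisymm
  · rw [Submodule.span_le]
    rintro v (⟨i, ℓ, rfl⟩ | ⟨k, rfl⟩)
    · refine FamCode.single_mem_span
        (Set.range fun i : Fin p => ((H i : MvPolynomial (Fin n ⊕ Fin p) K) :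
          MvPowerSeries (Fin n ⊕ Fin p) K)) _ (fun g hg ℓ' => ?_) ?_ ℓ
      · obtain ⟨j, rfl⟩ := hg
        exact Submodule.subset_span (Or.inl ⟨j, ℓ', rfl⟩)
      · rw [← hJ, hJ']
        exact Ideal.subset_span ⟨i, rfl⟩
    · show (fun m => inclPS (substY (G k m) h)) ∈ _
      have hsplit : (fun m => inclPS (substY (G k m) h)) =
          (fun m => ((G k m : MvPolynomial (Fin n ⊕ Fin p) K) :
            MvPowerSeries (Fin n ⊕ Fin p) K)) +
          fun m => (inclPS (substY (G k m) h) -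
            ((G k m : MvPolynomial (Fin n ⊕ Fin p) K) : MvPowerSeries (Fin n ⊕ Fin p) K)) := by
        funext m
        simp
      rw [hsplit]
      refine add_mem (Submodule.subset_span (Or.inr ⟨k, rfl⟩))
        (FamCode.vec_mem_span
          (Set.range fun i : Fin p => ((H i : MvPolynomial (Fin n ⊕ Fin p) K) :
            MvPowerSeries (Fin n ⊕ Fin p) K)) _ (fun g hg ℓ' => ?_) _ (fun m => ?_))
      · obtain ⟨j, rfl⟩ := hg
        exact Submodule.subset_span (Or.inl ⟨j, ℓ', rfl⟩)
      · have hm := FamCode.sub_mem_Jyh h h0 (G k m)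
        rw [hJ] at hm
        rw [FamCode.inclHom_apply] at hm
        simpa using neg_mem hm
  · rw [Submodule.span_le]
    rintro v (⟨i, ℓ, rfl⟩ | ⟨k, rfl⟩)
    · refine FamCode.single_mem_span
        (Set.range fun i : Fin p =>
          MvPowerSeries.X (Sum.inr i) - inclPS (h i)) _ (fun g hg ℓ' => ?_) ?_ ℓ
      · obtain ⟨j, rfl⟩ := hg
        exact Submodule.subset_span (Or.inl ⟨j, ℓ', rfl⟩)
      · rw [← hJ', hJ]
        exact Ideal.subset_span ⟨i, rfl⟩
    · show (fun m => ((G k m : MvPolynomial (Fin n ⊕ Fin p) K) :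
          MvPowerSeries (Fin n ⊕ Fin p) K)) ∈ _
      have hsplit : (fun m => ((G k m : MvPolynomial (Fin n ⊕ Fin p) K) :
            MvPowerSeries (Fin n ⊕ Fin p) K)) =
          (fun m => inclPS (substY (G k m) h)) +
          fun m => (((G k m : MvPolynomial (Fin n ⊕ Fin p) K) :
            MvPowerSeries (Fin n ⊕ Fin p) K) - inclPS (substY (G k m) h)) := by
        funext m
        simp
      rw [hsplit]
      refine add_mem (Submodule.subset_span (Or.inr ⟨k, rfl⟩))
        (FamCode.vec_mem_span
          (Set.range fun i : Fin p =>
            MvPowerSeries.X (Sum.inr i) - inclPS (h i)) _ (fun g hg ℓ' => ?_) _ (fun m => ?_))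
      · obtain ⟨j, rfl⟩ := hg
        exact Submodule.subset_span (Or.inl ⟨j, ℓ', rfl⟩)
      · have hm := FamCode.sub_mem_Jyh h h0 (G k m)
        rw [hJ', FamCode.inclHom_apply] at hm
        exact hm
end

section
/- Let K be a field and g = (x − y²)(y − x²) ∈ K[[x,y]]. There exists a unique power series r ∈ K[[T]] with r(0) = 0 such that xy − r(x) − r(y) lies in the ideal of K[[x,y]] generated by g; moreover this r satisfies the functional equation r(T) + r(T²) = T³ in K[[T]]. -/
variable {K : Type*} [Field K]

open scoped Classical in
/-- For `r ∈ K[[T]]`, the power series `r(xᵢ) ∈ K[[x₀,x₁]]` obtained by substituting the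
variable `xᵢ` for `T`. -/
noncomputable def rSub (i : Fin 2) (r : PowerSeries K) : MvPowerSeries (Fin 2) K :=
  fun e =>
    if e = Finsupp.single i (e i) then PowerSeries.coeff (e i) r else 0

/-- For `r ∈ K[[T]]`, the power series `r(T²)` obtained by substituting `T²` for `T`. -/
noncomputable def compSq (r : PowerSeries K) : PowerSeries K :=
  PowerSeries.mk fun m => if 2 ∣ m then PowerSeries.coeff (m / 2) r else 0

/-- The series `g = (x − y²)(y − x²) ∈ K[[x,y]]`. -/
noncomputable def gEx (K : Type*) [Field K] : MvPowerSeries (Fin 2) K :=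
  (MvPowerSeries.X 0 - MvPowerSeries.X 1 ^ 2) * (MvPowerSeries.X 1 - MvPowerSeries.X 0 ^ 2)

namespace Ex52

open MvPowerSeries Finset

/-! ### The candidate power series `r` -/

noncomputable def rc (K : Type*) [Field K] : ℕ → K
  | 0 => 0
  | (n+1) => if n + 1 = 3 then 1 else if 2 ∣ (n+1) then - rc K ((n+1)/2) else 0
  decreasing_by omega

lemma rc_key (n : ℕ) : rc K n + (if 2 ∣ n then rc K (n/2) else 0) = if n = 3 then 1 else 0 := by
  match n with
  | 0 => simp [rc]
  | (m+1) =>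
    rw [rc]
    by_cases h3 : m + 1 = 3
    · have : ¬ (2 ∣ m + 1) := by omega
      simp [h3, this]
    · simp only [if_neg h3]
      by_cases h2 : 2 ∣ m + 1
      · simp [h2]
      · simp [h2]

noncomputable def rr (K : Type*) [Field K] : PowerSeries K := PowerSeries.mk (rc K)

lemma constantCoeff_rr : PowerSeries.constantCoeff (rr K) = 0 := by
  rw [← PowerSeries.coeff_zero_eq_constantCoeff_apply]
  simp [rr, rc]

lemma rc_zero' : PowerSeries.coeff 0 (rr K) = 0 := by simp [rr, rc]

lemma coeff_compSq (s : PowerSeries K) (m : ℕ) :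
    PowerSeries.coeff m (compSq s) = if 2 ∣ m then PowerSeries.coeff (m / 2) s else 0 := by
  simp [compSq]

lemma funEq : rr K + compSq (rr K) = PowerSeries.X ^ 3 := by
  ext m
  rw [map_add, coeff_compSq, PowerSeries.coeff_X_pow]
  simp only [rr, PowerSeries.coeff_mk]
  exact rc_key m

/-! ### Substituting `T^(2^k)` for `T` -/

noncomputable def cIter (k : ℕ) (s : PowerSeries K) : PowerSeries K :=
  PowerSeries.mk fun m => if 2^k ∣ m then PowerSeries.coeff (m / 2^k) s else 0

lemma coeff_cIter (k : ℕ) (s : PowerSeries K) (m : ℕ) :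
    PowerSeries.coeff m (cIter k s) = if 2^k ∣ m then PowerSeries.coeff (m / 2^k) s else 0 := by
  simp [cIter]

lemma cIter_zero (s : PowerSeries K) : cIter 0 s = s := by
  ext m; simp [coeff_cIter]

lemma cIter_succ (k : ℕ) (s : PowerSeries K) : cIter (k+1) s = cIter k (compSq s) := by
  ext m
  rw [coeff_cIter, coeff_cIter]
  have hp : (0:ℕ) < 2^k := by positivity
  by_cases h : 2^k ∣ m
  · rw [if_pos h]
    obtain ⟨d, rfl⟩ := h
    simp only [compSq, PowerSeries.coeff_mk]
    rw [Nat.mul_div_cancel_left _ hp, pow_succ, Nat.mul_div_mul_left _ _ hp]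
    exact if_congr (mul_dvd_mul_iff_left (by positivity : (2:ℕ)^k ≠ 0)) rfl rfl
  · rw [if_neg h, if_neg (fun h2 => h (dvd_trans (pow_dvd_pow 2 (Nat.le_succ k)) h2))]

lemma cIter_add (k : ℕ) (s t : PowerSeries K) : cIter k (s + t) = cIter k s + cIter k t := by
  ext m; simp only [coeff_cIter, map_add]; split <;> simp

lemma cIter_X_pow (k n : ℕ) :
    cIter k ((PowerSeries.X : PowerSeries K) ^ n) = PowerSeries.X ^ (n * 2^k) := by
  ext m
  rw [coeff_cIter, PowerSeries.coeff_X_pow, PowerSeries.coeff_X_pow]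
  have hp : (0:ℕ) < 2^k := by positivity
  by_cases h : 2^k ∣ m
  · obtain ⟨c, rfl⟩ := h
    rw [if_pos ⟨c, rfl⟩, Nat.mul_div_cancel_left _ hp]
    by_cases hc : c = n
    · simp [hc, mul_comm]
    · rw [if_neg hc, if_neg]
      intro hh
      exact hc (by nlinarith [hh])
  · rw [if_neg h, if_neg]
    intro hh; exact h (hh ▸ ⟨n, mul_comm n _⟩)

/-! ### Basic lemmas about `rSub` -/

open scoped Classical in
lemma coeff_rSub (i : Fin 2) (s : PowerSeries K) (e : Fin 2 →₀ ℕ) :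
    MvPowerSeries.coeff e (rSub i s)
      = if e = Finsupp.single i (e i) then PowerSeries.coeff (e i) s else 0 := rfl

lemma rSub_add (i : Fin 2) (s t : PowerSeries K) :
    rSub i (s + t) = rSub i s + rSub i t := by
  classical
  apply MvPowerSeries.ext; intro e
  rw [map_add, coeff_rSub, coeff_rSub, coeff_rSub, map_add]
  split <;> simp

lemma rSub_sub (i : Fin 2) (s t : PowerSeries K) :
    rSub i (s - t) = rSub i s - rSub i t := by
  classical
  apply MvPowerSeries.ext; intro e
  rw [map_sub, coeff_rSub, coeff_rSub, coeff_rSub, map_sub]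
  split <;> simp

lemma rSub_X_pow (i : Fin 2) (n : ℕ) :
    rSub (K := K) i (PowerSeries.X ^ n) = MvPowerSeries.X i ^ n := by
  classical
  apply MvPowerSeries.ext; intro e
  rw [coeff_rSub, MvPowerSeries.coeff_X_pow, PowerSeries.coeff_X_pow]
  by_cases h : e = Finsupp.single i n
  · rw [if_pos h]
    have hi : e i = n := by rw [h, Finsupp.single_eq_same]
    rw [if_pos (by rw [hi, ← h]), if_pos hi]
  · rw [if_neg h]
    by_cases h2 : e = Finsupp.single i (e i)
    · rw [if_pos h2, if_neg (fun hn => h (by rw [h2, hn]))]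
    · rw [if_neg h2]

/-! ### Order bounds -/

def OrdGe (f : MvPowerSeries (Fin 2) K) (d : ℕ) : Prop :=
  ∀ e : Fin 2 →₀ ℕ, e 0 + e 1 < d → MvPowerSeries.coeff e f = 0

lemma ordGe_mono {f : MvPowerSeries (Fin 2) K} {d d' : ℕ} (h : OrdGe f d) (hd : d' ≤ d) :
    OrdGe f d' := fun e he => h e (lt_of_lt_of_le he hd)

lemma ordGe_add {f g : MvPowerSeries (Fin 2) K} {d : ℕ} (hf : OrdGe f d) (hg : OrdGe g d) :
    OrdGe (f + g) d := fun e he => by rw [map_add, hf e he, hg e he, add_zero]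

lemma ordGe_mul {f g : MvPowerSeries (Fin 2) K} {d d' : ℕ} (hf : OrdGe f d) (hg : OrdGe g d') :
    OrdGe (f * g) (d + d') := by
  classical
  intro e he
  rw [MvPowerSeries.coeff_mul]
  apply Finset.sum_eq_zero
  intro p hp
  rw [HasAntidiagonal.mem_antidiagonal] at hp
  have h0 : p.1 0 + p.2 0 = e 0 := by rw [← hp]; rfl
  have h1 : p.1 1 + p.2 1 = e 1 := by rw [← hp]; rfl
  by_cases hc : p.1 0 + p.1 1 < d
  · rw [hf p.1 hc, zero_mul]
  · rw [hg p.2 (by omega), mul_zero]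

lemma ordGe_X_pow (i : Fin 2) (n : ℕ) :
    OrdGe ((MvPowerSeries.X i : MvPowerSeries (Fin 2) K) ^ n) n := by
  classical
  intro e he
  rw [MvPowerSeries.coeff_X_pow, if_neg]
  intro h
  have : e i = n := by rw [h, Finsupp.single_eq_same]
  fin_cases i <;> simp at this <;> omega

/-! ### The auxiliary series `uk`, `Pk`, `Gk`, `Fk` -/

noncomputable def uk (K : Type*) [Field K] (j : ℕ) : MvPowerSeries (Fin 2) K :=
  (MvPowerSeries.X 0 ^ (2^j) + MvPowerSeries.X 1 ^ (2^(j+1)))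
    * (MvPowerSeries.X 1 ^ (2^j) + MvPowerSeries.X 0 ^ (2^(j+1)))

noncomputable def Pk (K : Type*) [Field K] (k : ℕ) : MvPowerSeries (Fin 2) K :=
  ∏ j ∈ Finset.range k, uk K j

lemma ordGe_uk (j : ℕ) : OrdGe (uk K j) 2 := by
  have h1 : (1:ℕ) ≤ 2^j := Nat.one_le_two_pow
  have h2 : (1:ℕ) ≤ 2^(j+1) := Nat.one_le_two_pow
  exact ordGe_mul
    (ordGe_add (ordGe_mono (ordGe_X_pow (K := K) 0 (2^j)) h1)
      (ordGe_mono (ordGe_X_pow 1 (2^(j+1))) h2))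
    (ordGe_add (ordGe_mono (ordGe_X_pow (K := K) 1 (2^j)) h1)
      (ordGe_mono (ordGe_X_pow 0 (2^(j+1))) h2))

lemma ordGe_Pk (k : ℕ) : OrdGe (Pk K k) (2 * k) := by
  induction k with
  | zero => intro e he; omega
  | succ n ih =>
    rw [Pk, Finset.prod_range_succ]
    have := ordGe_mul (ih) (ordGe_uk (K := K) n)
    rw [show 2 * (n+1) = 2 * n + 2 by ring]
    exact this

noncomputable def Gk (K : Type*) [Field K] (k : ℕ) : MvPowerSeries (Fin 2) K :=
  (MvPowerSeries.X 0 ^ (2^k) - MvPowerSeries.X 1 ^ (2^(k+1)))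
    * (MvPowerSeries.X 1 ^ (2^k) - MvPowerSeries.X 0 ^ (2^(k+1)))

noncomputable def Fk (K : Type*) [Field K] (k : ℕ) : MvPowerSeries (Fin 2) K :=
  MvPowerSeries.X 0 ^ (2^k) * MvPowerSeries.X 1 ^ (2^k)
    - (rSub 0 (cIter k (rr K)) + rSub 1 (cIter k (rr K)))

lemma Gk_zero : Gk K 0 = gEx K := by
  simp [Gk, gEx, pow_one]

lemma pow_two_pow_succ (i : Fin 2) (k : ℕ) :
    (MvPowerSeries.X i : MvPowerSeries (Fin 2) K) ^ (2^(k+1))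
      = (MvPowerSeries.X i ^ (2^k))^2 := by
  rw [← pow_mul, ← pow_succ]

lemma pow_three_two_pow (i : Fin 2) (k : ℕ) :
    (MvPowerSeries.X i : MvPowerSeries (Fin 2) K) ^ (3 * 2^k)
      = (MvPowerSeries.X i ^ (2^k))^3 := by
  rw [← pow_mul, mul_comm]

lemma Gk_succ (k : ℕ) : Gk K (k+1) = Gk K k * uk K k := by
  have e3 : (MvPowerSeries.X 0 : MvPowerSeries (Fin 2) K) ^ (2^(k+2))
      = ((MvPowerSeries.X 0 ^ (2^k))^2)^2 := by
    rw [← pow_two_pow_succ, ← pow_two_pow_succ]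
  have e4 : (MvPowerSeries.X 1 : MvPowerSeries (Fin 2) K) ^ (2^(k+2))
      = ((MvPowerSeries.X 1 ^ (2^k))^2)^2 := by
    rw [← pow_two_pow_succ, ← pow_two_pow_succ]
  rw [Gk, Gk, uk, e3, e4, pow_two_pow_succ, pow_two_pow_succ]
  ring

lemma Gk_eq (k : ℕ) : Gk K k = gEx K * Pk K k := by
  induction k with
  | zero => simp [Gk_zero, Pk]
  | succ n ih =>
    rw [Gk_succ, ih]; simp only [Pk]; rw [Finset.prod_range_succ, mul_assoc]

lemma hsum (i : Fin 2) (k : ℕ) :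
    rSub i (cIter k (rr K)) + rSub i (cIter (k+1) (rr K)) = MvPowerSeries.X i ^ (3 * 2^k) := by
  rw [← rSub_add, cIter_succ, ← cIter_add, funEq, cIter_X_pow, rSub_X_pow]

lemma Fk_rec (k : ℕ) : Fk K k = Gk K k - Fk K (k+1) := by
  have h0 := hsum (K := K) 0 k
  have h1 := hsum (K := K) 1 k
  rw [pow_three_two_pow] at h0 h1
  rw [Fk, Fk, Gk, pow_two_pow_succ, pow_two_pow_succ]
  linear_combination -h0 - h1

lemma master (n : ℕ) :
    Fk K 0 = gEx K * (∑ k ∈ Finset.range n, (-1)^k * Pk K k) + (-1)^n * Fk K n := by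
  induction n with
  | zero => simp
  | succ n ih =>
    rw [Fk_rec n, Gk_eq n] at ih
    rw [ih, Finset.sum_range_succ]
    ring

/-! ### Coefficient vanishing and the quotient series `qq` -/

lemma coeff_cIter_small (n m : ℕ) (hm : m < 2^n) :
    PowerSeries.coeff m (cIter n (rr K)) = 0 := by
  rw [coeff_cIter]
  split
  · next h =>
    obtain ⟨c, rfl⟩ := h
    have hp : (0:ℕ) < 2^n := by positivity
    have hc : c = 0 := by
      rcases Nat.eq_zero_or_pos c with h | h
      · exact h
      · exfalso; have : 2^n * 1 ≤ 2^n * c := Nat.mul_le_mul_left _ h; omega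
    subst hc
    simpa using rc_zero' (K := K)
  · rfl

lemma Fk_coeff_zero (n : ℕ) (e : Fin 2 →₀ ℕ) (h0 : e 0 < 2^n) (h1 : e 1 < 2^n) :
    MvPowerSeries.coeff e (Fk K n) = 0 := by
  classical
  rw [Fk, map_sub, map_add]
  have hm : (MvPowerSeries.X 0 : MvPowerSeries (Fin 2) K)^(2^n) * MvPowerSeries.X 1^(2^n)
      = MvPowerSeries.monomial (Finsupp.single 0 (2^n) + Finsupp.single 1 (2^n)) 1 := by
    rw [X_pow_eq, X_pow_eq, monomial_mul_monomial, one_mul]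
  rw [hm, coeff_monomial, if_neg ?hne, coeff_rSub, coeff_rSub]
  case hne =>
    intro h
    have : e 0 = 2^n := by rw [h]; simp
    omega
  split
  · next h =>
    rw [coeff_cIter_small n (e 0) h0]
    split
    · rw [coeff_cIter_small n (e 1) h1]; ring
    · ring
  · split
    · rw [coeff_cIter_small n (e 1) h1]; ring
    · ring

noncomputable def qq (K : Type*) [Field K] : MvPowerSeries (Fin 2) K :=
  fun e => ∑ k ∈ Finset.range (e 0 + e 1 + 1),
    MvPowerSeries.coeff e ((-1)^k * Pk K k)

lemma coeff_qq (e : Fin 2 →₀ ℕ) :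
    MvPowerSeries.coeff e (qq K)
      = ∑ k ∈ Finset.range (e 0 + e 1 + 1), MvPowerSeries.coeff e ((-1)^k * Pk K k) := rfl

lemma coeff_qq_stable (e : Fin 2 →₀ ℕ) (n : ℕ) (hn : e 0 + e 1 + 1 ≤ n) :
    MvPowerSeries.coeff e (qq K)
      = MvPowerSeries.coeff e (∑ k ∈ Finset.range n, (-1)^k * Pk K k) := by
  rw [coeff_qq, map_sum]
  apply Finset.sum_subset
  · exact Finset.range_subset_range.mpr hn
  · intro k hk hk2
    rw [Finset.mem_range] at hk hk2
    have : MvPowerSeries.coeff e (Pk K k) = 0 := ordGe_Pk k e (by omega)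
    rcases Nat.even_or_odd k with hpar | hpar
    · rw [hpar.neg_one_pow, one_mul]; exact this
    · rw [hpar.neg_one_pow, neg_one_mul, map_neg, this, neg_zero]

lemma g_mul_qq : gEx K * qq K = Fk K 0 := by
  classical
  apply MvPowerSeries.ext; intro e
  set N := e 0 + e 1 + 1 with hN
  have hstep : MvPowerSeries.coeff e (gEx K * qq K)
      = MvPowerSeries.coeff e (gEx K * (∑ k ∈ Finset.range N, (-1)^k * Pk K k)) := by
    rw [MvPowerSeries.coeff_mul, MvPowerSeries.coeff_mul]
    apply Finset.sum_congr rfl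
    intro p hp
    rw [HasAntidiagonal.mem_antidiagonal] at hp
    congr 1
    have h0 : p.1 0 + p.2 0 = e 0 := by rw [← hp]; rfl
    have h1 : p.1 1 + p.2 1 = e 1 := by rw [← hp]; rfl
    exact coeff_qq_stable p.2 N (by omega)
  rw [hstep, master N, map_add]
  have hz : MvPowerSeries.coeff e ((-1)^N * Fk K N) = 0 := by
    have h2 : e 0 < 2^N ∧ e 1 < 2^N := by
      constructor <;> calc _ < N := by omega
        _ < 2^N := Nat.lt_two_pow_self
    have hFz : MvPowerSeries.coeff e (Fk K N) = 0 := Fk_coeff_zero N e h2.1 h2.2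
    rcases Nat.even_or_odd N with hpar | hpar
    · rw [hpar.neg_one_pow, one_mul]; exact hFz
    · rw [hpar.neg_one_pow, neg_one_mul, map_neg, hFz, neg_zero]
  rw [hz, add_zero]

lemma Fk_zero_eq :
    Fk K 0 = MvPowerSeries.X 0 * MvPowerSeries.X 1 - (rSub 0 (rr K) + rSub 1 (rr K)) := by
  rw [Fk, cIter_zero]
  norm_num

/-! ### The substitution `x ↦ T², y ↦ T` (as a coefficientwise map) -/

/-- the exponent `(a, m - 2a)` -/
noncomputable def Ee (a m : ℕ) : Fin 2 →₀ ℕ := Finsupp.single 0 a + Finsupp.single 1 (m - 2*a)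

lemma Ee_apply0 (a m : ℕ) : Ee a m 0 = a := by simp [Ee]
lemma Ee_apply1 (a m : ℕ) : Ee a m 1 = m - 2*a := by simp [Ee]

noncomputable def phi (h : MvPowerSeries (Fin 2) K) : PowerSeries K :=
  PowerSeries.mk fun m => ∑ a ∈ Finset.range (m/2 + 1), MvPowerSeries.coeff (Ee a m) h

lemma coeff_phi (h : MvPowerSeries (Fin 2) K) (m : ℕ) :
    PowerSeries.coeff m (phi h)
      = ∑ a ∈ Finset.range (m/2 + 1), MvPowerSeries.coeff (Ee a m) h := by
  simp [phi]

lemma phi_key (h : MvPowerSeries (Fin 2) K) :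
    phi ((MvPowerSeries.X 0 - MvPowerSeries.X 1 ^ 2) * h) = 0 := by
  classical
  ext m
  rw [coeff_phi, map_zero]
  have hX0 : (MvPowerSeries.X 0 : MvPowerSeries (Fin 2) K)
      = monomial (Finsupp.single 0 1) 1 := by
    rw [← X_pow_eq, pow_one]
  have hX1 : (MvPowerSeries.X 1 : MvPowerSeries (Fin 2) K)^2
      = monomial (Finsupp.single 1 2) 1 := X_pow_eq 1 2
  have expand : ∀ a ∈ Finset.range (m/2 + 1),
      MvPowerSeries.coeff (Ee a m) ((MvPowerSeries.X 0 - MvPowerSeries.X 1 ^ 2) * h)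
      = (if 1 ≤ a then MvPowerSeries.coeff (Ee (a-1) (m-2)) h else 0)
        - (if 2*a + 2 ≤ m then MvPowerSeries.coeff (Ee a (m-2)) h else 0) := by
    intro a ha
    rw [Finset.mem_range] at ha
    have ham : 2 * a ≤ m := by omega
    rw [sub_mul, map_sub, hX0, hX1, coeff_monomial_mul, coeff_monomial_mul]
    congr 1
    · by_cases h1 : 1 ≤ a
      · rw [if_pos, if_pos h1, one_mul]
        · have : Ee a m - Finsupp.single 0 1 = Ee (a-1) (m-2) := by
            ext i
            fin_cases i <;> simp [Ee, Finsupp.single_apply] <;> omega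
          rw [this]
        · intro i
          fin_cases i <;> simp [Ee, Finsupp.single_apply] <;> omega
      · rw [if_neg, if_neg h1]
        intro hle
        have h2 := hle 0
        rw [Ee_apply0] at h2
        simp [Finsupp.single_apply] at h2
        omega
    · by_cases h2 : 2*a + 2 ≤ m
      · rw [if_pos, if_pos h2, one_mul]
        · have : Ee a m - Finsupp.single 1 2 = Ee a (m-2) := by
            ext i
            fin_cases i <;> simp [Ee, Finsupp.single_apply] <;> omega
          rw [this]
        · intro i
          fin_cases i <;> simp [Ee, Finsupp.single_apply] <;> omega
      · rw [if_neg, if_neg h2]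
        intro hle
        have h3 := hle 1
        rw [Ee_apply1] at h3
        simp [Finsupp.single_apply] at h3
        omega
  rw [Finset.sum_congr rfl expand, Finset.sum_sub_distrib]
  have hL : ∑ a ∈ Finset.range (m/2 + 1),
        (if 1 ≤ a then MvPowerSeries.coeff (Ee (a-1) (m-2)) h else 0)
      = ∑ a ∈ Finset.range (m/2), MvPowerSeries.coeff (Ee a (m-2)) h := by
    rw [Finset.sum_range_succ']
    rw [if_neg (by omega), add_zero]
    apply Finset.sum_congr rfl
    intro a ha
    rw [if_pos (by omega), Nat.add_sub_cancel]
  have hR : ∑ a ∈ Finset.range (m/2 + 1),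
        (if 2*a + 2 ≤ m then MvPowerSeries.coeff (Ee a (m-2)) h else 0)
      = ∑ a ∈ Finset.range (m/2), MvPowerSeries.coeff (Ee a (m-2)) h := by
    rw [Finset.sum_range_succ, if_neg (by omega), add_zero]
    apply Finset.sum_congr rfl
    intro a ha
    rw [Finset.mem_range] at ha
    rw [if_pos (by omega)]
  rw [hL, hR, sub_self]

lemma phi_g_mul (h : MvPowerSeries (Fin 2) K) : phi (gEx K * h) = 0 := by
  rw [gEx, mul_assoc]
  exact phi_key _

lemma phi_rSub0 (s : PowerSeries K) : phi (rSub 0 s) = compSq s := by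
  classical
  ext m
  rw [coeff_phi, compSq, PowerSeries.coeff_mk]
  have hz : ∀ a ∈ Finset.range (m/2 + 1), a ≠ m/2 →
      MvPowerSeries.coeff (Ee a m) (rSub 0 s) = 0 := by
    intro a ha hne
    rw [Finset.mem_range] at ha
    rw [coeff_rSub, if_neg]
    intro hEq
    have h1 := DFunLike.congr_fun hEq (1 : Fin 2)
    rw [Ee_apply1, Ee_apply0] at h1
    simp [Finsupp.single_apply] at h1
    omega
  rw [Finset.sum_eq_single_of_mem (m/2) (Finset.self_mem_range_succ _) hz]
  rw [coeff_rSub, Ee_apply0]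
  by_cases hpar : 2 ∣ m
  · rw [if_pos hpar, if_pos]
    ext i
    fin_cases i <;> simp [Ee, Finsupp.single_apply] <;> omega
  · rw [if_neg hpar, if_neg]
    intro hEq
    have h1 := DFunLike.congr_fun hEq (1 : Fin 2)
    rw [Ee_apply1] at h1
    simp [Finsupp.single_apply] at h1
    omega

lemma phi_rSub1 (s : PowerSeries K) : phi (rSub 1 s) = s := by
  classical
  ext m
  rw [coeff_phi]
  have hz : ∀ a ∈ Finset.range (m/2 + 1), a ≠ 0 →
      MvPowerSeries.coeff (Ee a m) (rSub 1 s) = 0 := by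
    intro a ha hne
    rw [coeff_rSub, if_neg]
    intro hEq
    have h1 := DFunLike.congr_fun hEq (0 : Fin 2)
    rw [Ee_apply0, Ee_apply1] at h1
    simp [Finsupp.single_apply] at h1
    omega
  rw [Finset.sum_eq_single_of_mem 0 (Finset.mem_range.mpr (by omega)) hz]
  rw [coeff_rSub, Ee_apply1, if_pos]
  · norm_num
  · ext i
    fin_cases i <;> simp [Ee, Finsupp.single_apply]

lemma phi_add (f g : MvPowerSeries (Fin 2) K) : phi (f + g) = phi f + phi g := by
  ext m
  rw [map_add, coeff_phi, coeff_phi, coeff_phi, ← Finset.sum_add_distrib]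
  exact Finset.sum_congr rfl fun a _ => map_add _ _ _

/-! ### Rigidity of the functional equation -/

lemma eq_zero_of_funEq_zero (d : PowerSeries K) (h0 : PowerSeries.constantCoeff d = 0)
    (h : compSq d + d = 0) : d = 0 := by
  ext n
  induction n using Nat.strong_induction_on with
  | _ n ih =>
    have hc := congrArg (PowerSeries.coeff n) h
    rw [map_add, coeff_compSq, map_zero] at hc
    rcases n with _ | n
    · simpa [PowerSeries.coeff_zero_eq_constantCoeff] using h0
    · by_cases h2 : 2 ∣ n+1
      · have hih := ih ((n+1)/2) (by omega)
        rw [map_zero] at hih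
        rw [if_pos h2, hih, zero_add] at hc
        simpa using hc
      · rw [if_neg h2, zero_add] at hc
        simpa using hc

end Ex52

/-- Example 5.2: there is a unique `r ∈ K[[T]]` with `r(0) = 0` such that
`xy − r(x) − r(y)` lies in the ideal generated by `g = (x − y²)(y − x²)`; moreover this `r`
satisfies `r(T) + r(T²) = T³`. -/
theorem remainder_functional_equation :
    ∃ r : PowerSeries K,
      (PowerSeries.constantCoeff r = 0 ∧
        MvPowerSeries.X 0 * MvPowerSeries.X 1 - (rSub 0 r + rSub 1 r) ∈
          Ideal.span {gEx K}) ∧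
      (∀ r' : PowerSeries K,
        PowerSeries.constantCoeff r' = 0 →
        MvPowerSeries.X 0 * MvPowerSeries.X 1 - (rSub 0 r' + rSub 1 r') ∈
          Ideal.span {gEx K} → r' = r) ∧
      r + compSq r = PowerSeries.X ^ 3 := by
  refine ⟨Ex52.rr K, ⟨Ex52.constantCoeff_rr, ?_⟩, ?_, Ex52.funEq⟩
  · rw [← Ex52.Fk_zero_eq]
    exact Ideal.mem_span_singleton.mpr ⟨Ex52.qq K, Ex52.g_mul_qq.symm⟩
  · intro r' h0 hmem
    have hr : MvPowerSeries.X 0 * MvPowerSeries.X 1 - (rSub 0 (Ex52.rr K) + rSub 1 (Ex52.rr K)) ∈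
        Ideal.span {gEx K} := by
      rw [← Ex52.Fk_zero_eq]
      exact Ideal.mem_span_singleton.mpr ⟨Ex52.qq K, Ex52.g_mul_qq.symm⟩
    have hD : (MvPowerSeries.X 0 * MvPowerSeries.X 1 - (rSub 0 (Ex52.rr K) + rSub 1 (Ex52.rr K)))
        - (MvPowerSeries.X 0 * MvPowerSeries.X 1 - (rSub 0 r' + rSub 1 r')) ∈
        Ideal.span {gEx K} := Ideal.sub_mem _ hr hmem
    set d : PowerSeries K := r' - Ex52.rr K with hd
    have hDd : (MvPowerSeries.X 0 * MvPowerSeries.X 1 - (rSub 0 (Ex52.rr K) + rSub 1 (Ex52.rr K)))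
        - (MvPowerSeries.X 0 * MvPowerSeries.X 1 - (rSub 0 r' + rSub 1 r'))
        = rSub 0 d + rSub 1 d := by
      rw [hd, Ex52.rSub_sub, Ex52.rSub_sub]
      ring
    rw [hDd] at hD
    obtain ⟨h, hh⟩ := Ideal.mem_span_singleton.mp hD
    have hphi : Ex52.phi (rSub 0 d + rSub 1 d) = 0 := by
      rw [hh]; exact Ex52.phi_g_mul h
    rw [Ex52.phi_add, Ex52.phi_rSub0, Ex52.phi_rSub1] at hphi
    have hd0 : PowerSeries.constantCoeff d = 0 := by
      rw [hd, map_sub, h0, Ex52.constantCoeff_rr, sub_zero]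
    have : d = 0 := Ex52.eq_zero_of_funEq_zero d hd0 hphi
    rw [hd] at this
    exact sub_eq_zero.mp this
end
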